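/- With the notation of the previous statement and z = -cτ(1 + i√(1 - 1/(c²τ))) for c > 0 fixed, one has det(R)·T₁₂·e^{(a−b)z₂} = 1 + O(exp(−2cτ·min(b/√γ₁, (a−b)/√γ₂))) as τ → ∞; in particular R is invertible for all sufficiently large τ. -/

import Mathlib

noncomputable def zfun (c τ : ℝ) : ℂ :=
  -(c * τ) * (1 + Complex.I * Real.sqrt (1 - 1 / (c ^ 2 * τ)))

noncomputable def Rmat (a b γ₁ γ₂ c τ : ℝ) : Matrix (Fin 2) (Fin 2) ℂ :=
  let z₁ : ℂ := zfun c τ / Real.sqrt γ₁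
  let z₂ : ℂ := zfun c τ / Real.sqrt γ₂
  let T₁₂ : ℂ := (2 * Real.sqrt γ₁ / (Real.sqrt γ₁ + Real.sqrt γ₂) : ℝ)
  let R₁₂ : ℂ := ((Real.sqrt γ₁ - Real.sqrt γ₂) / (Real.sqrt γ₁ + Real.sqrt γ₂) : ℝ)
  !![Complex.exp ((a - b) * z₂), -Complex.exp (-(a - b) * z₂);
     (1 / T₁₂) * (1 - R₁₂ * Complex.exp (2 * b * z₁)),
     (1 / T₁₂) * (R₁₂ - Complex.exp (2 * b * z₁))]

lemma zre (c τ : ℝ) : (zfun c τ).re = -(c*τ) := by simp [zfun]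

lemma absexp (r s c τ : ℝ) :
    ‖Complex.exp ((r:ℂ) * (zfun c τ / s))‖ = Real.exp (-(c*τ) * r / s) := by
  rw [Complex.norm_exp]
  congr 1
  have h : ((r:ℂ) * (zfun c τ / (s:ℝ))) = (((r/s:ℝ)):ℂ) * zfun c τ := by
    push_cast; ring
  rw [h, Complex.re_ofReal_mul, zre]
  ring

lemma alg (T R E F G H : ℂ) (hT : T ≠ 0) (e1 : E * E = H) (e2 : F * E = 1) :
    (E * ((1/T) * (R - G)) - (-F) * ((1/T) * (1 - R * G))) * T * E - 1
      = R * H - G * H - R * G := by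
  have hT' : (1/T) * T = 1 := by field_simp
  linear_combination (E*(R-G) + F*(1-R*G))*E*hT' + (R - G) * e1 + (1 - R*G) * e2

lemma key (a b γ₁ γ₂ c τ : ℝ) (h1 : 0 < γ₁) (h2 : 0 < γ₂) :
    (Rmat a b γ₁ γ₂ c τ).det *
        ((2 * Real.sqrt γ₁ / (Real.sqrt γ₁ + Real.sqrt γ₂) : ℝ) : ℂ) *
        Complex.exp ((a - b) * (zfun c τ / Real.sqrt γ₂)) - 1 =
      (((Real.sqrt γ₁ - Real.sqrt γ₂) / (Real.sqrt γ₁ + Real.sqrt γ₂) : ℝ) : ℂ) *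
          Complex.exp (((2 * (a - b) : ℝ) : ℂ) * (zfun c τ / Real.sqrt γ₂))
        - Complex.exp (((2 * b : ℝ) : ℂ) * (zfun c τ / Real.sqrt γ₁)) *
            Complex.exp (((2 * (a - b) : ℝ) : ℂ) * (zfun c τ / Real.sqrt γ₂))
        - (((Real.sqrt γ₁ - Real.sqrt γ₂) / (Real.sqrt γ₁ + Real.sqrt γ₂) : ℝ) : ℂ) *
            Complex.exp (((2 * b : ℝ) : ℂ) * (zfun c τ / Real.sqrt γ₁)) := by
  have hs1 : (0:ℝ) < Real.sqrt γ₁ := Real.sqrt_pos.2 h1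
  have hs2 : (0:ℝ) < Real.sqrt γ₂ := Real.sqrt_pos.2 h2
  have hT : ((2 * Real.sqrt γ₁ / (Real.sqrt γ₁ + Real.sqrt γ₂) : ℝ) : ℂ) ≠ 0 := by
    rw [Complex.ofReal_ne_zero]
    positivity
  set z₂ : ℂ := zfun c τ / Real.sqrt γ₂ with hz2
  have e1 : Complex.exp ((a - b) * z₂) * Complex.exp ((a - b) * z₂)
      = Complex.exp (((2 * (a - b) : ℝ) : ℂ) * z₂) := by
    rw [← Complex.exp_add]; push_cast; ring_nf
  have e2 : Complex.exp (-((a:ℂ) - b) * z₂) * Complex.exp ((a - b) * z₂) = 1 := by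
    rw [← Complex.exp_add]; ring_nf; exact Complex.exp_zero
  rw [Rmat, Matrix.det_fin_two_of]
  have := alg ((2 * Real.sqrt γ₁ / (Real.sqrt γ₁ + Real.sqrt γ₂) : ℝ) : ℂ)
    (((Real.sqrt γ₁ - Real.sqrt γ₂) / (Real.sqrt γ₁ + Real.sqrt γ₂) : ℝ) : ℂ)
    (Complex.exp ((a - b) * z₂)) (Complex.exp (-((a:ℂ) - b) * z₂))
    (Complex.exp (((2 * b : ℝ) : ℂ) * (zfun c τ / Real.sqrt γ₁)))
    (Complex.exp (((2 * (a - b) : ℝ) : ℂ) * z₂)) hT e1 e2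
  push_cast at this ⊢
  convert this using 3 <;> ring_nf

lemma bound (a b : ℝ) (hb : 0 < b) (hba : b < a) (γ₁ γ₂ : ℝ) (h1 : 0 < γ₁) (h2 : 0 < γ₂)
    (c : ℝ) (hc : 0 < c) (τ : ℝ) (hτ : 0 < τ) :
    ‖(Rmat a b γ₁ γ₂ c τ).det *
            ((2 * Real.sqrt γ₁ / (Real.sqrt γ₁ + Real.sqrt γ₂) : ℝ) : ℂ) *
            Complex.exp ((a - b) * (zfun c τ / Real.sqrt γ₂)) - 1‖
      ≤ 3 * Real.exp (-2 * c * τ * min (b / Real.sqrt γ₁) ((a - b) / Real.sqrt γ₂)) := by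
  have hs1 : (0:ℝ) < Real.sqrt γ₁ := Real.sqrt_pos.2 h1
  have hs2 : (0:ℝ) < Real.sqrt γ₂ := Real.sqrt_pos.2 h2
  set m : ℝ := min (b / Real.sqrt γ₁) ((a - b) / Real.sqrt γ₂) with hm
  have hm1 : m ≤ b / Real.sqrt γ₁ := min_le_left _ _
  have hm2 : m ≤ (a - b) / Real.sqrt γ₂ := min_le_right _ _
  have hmpos : 0 < m := lt_min (by positivity) (div_pos (by linarith) hs2)
  rw [key a b γ₁ γ₂ c τ h1 h2]
  set R : ℂ := (((Real.sqrt γ₁ - Real.sqrt γ₂) / (Real.sqrt γ₁ + Real.sqrt γ₂) : ℝ) : ℂ)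
  set G : ℂ := Complex.exp (((2 * b : ℝ) : ℂ) * (zfun c τ / Real.sqrt γ₁))
  set H : ℂ := Complex.exp (((2 * (a - b) : ℝ) : ℂ) * (zfun c τ / Real.sqrt γ₂))
  have tri : ‖R * H - G * H - R * G‖
      ≤ ‖R‖ * ‖H‖ + ‖G‖ * ‖H‖
        + ‖R‖ * ‖G‖ := by
    calc ‖R * H - G * H - R * G‖
        ≤ ‖R * H - G * H‖ + ‖R * G‖ :=
          norm_sub_le _ _
      _ ≤ ‖R * H‖ + ‖G * H‖ + ‖R * G‖ := by
          have := norm_sub_le (R * H) (G * H)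
          linarith
      _ = _ := by rw [norm_mul, norm_mul, norm_mul]
  have hR : ‖R‖ ≤ 1 := by
    rw [Complex.norm_real, Real.norm_eq_abs, abs_div, abs_of_pos (by positivity : (0:ℝ) < Real.sqrt γ₁ + Real.sqrt γ₂)]
    rw [div_le_one (by positivity)]
    calc |Real.sqrt γ₁ - Real.sqrt γ₂| ≤ |Real.sqrt γ₁| + |Real.sqrt γ₂| := abs_sub _ _
      _ = Real.sqrt γ₁ + Real.sqrt γ₂ := by rw [abs_of_pos hs1, abs_of_pos hs2]
  have hG : ‖G‖ = Real.exp (-(c*τ) * (2*b) / Real.sqrt γ₁) := absexp _ _ _ _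
  have hH : ‖H‖ = Real.exp (-(c*τ) * (2*(a-b)) / Real.sqrt γ₂) := absexp _ _ _ _
  set E : ℝ := Real.exp (-2 * c * τ * m) with hE
  have hGE : ‖G‖ ≤ E := by
    rw [hG, hE, Real.exp_le_exp]
    have : -(c*τ) * (2*b) / Real.sqrt γ₁ = -2 * c * τ * (b / Real.sqrt γ₁) := by ring
    rw [this]
    nlinarith [mul_pos hc hτ]
  have hHE : ‖H‖ ≤ E := by
    rw [hH, hE, Real.exp_le_exp]
    have : -(c*τ) * (2*(a-b)) / Real.sqrt γ₂ = -2 * c * τ * ((a-b) / Real.sqrt γ₂) := by ring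
    rw [this]
    nlinarith [mul_pos hc hτ]
  have hG1 : ‖G‖ ≤ 1 := by
    rw [hG, Real.exp_le_one_iff]
    have : -(c*τ) * (2*b) / Real.sqrt γ₁ = -(2 * (c * τ) * b / Real.sqrt γ₁) := by ring
    rw [this, neg_nonpos]
    positivity
  have hGpos : 0 < ‖G‖ := by rw [hG]; exact Real.exp_pos _
  have hHpos : 0 < ‖H‖ := by rw [hH]; exact Real.exp_pos _
  have hRpos : 0 ≤ ‖R‖ := norm_nonneg _
  calc ‖R * H - G * H - R * G‖
      ≤ ‖R‖ * ‖H‖ + ‖G‖ * ‖H‖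
        + ‖R‖ * ‖G‖ := tri
    _ ≤ 3 * E := by nlinarith
  
theorem stmt_7 (a b : ℝ) (hb : 0 < b) (hba : b < a) (γ₁ γ₂ : ℝ) (h1 : 0 < γ₁) (h2 : 0 < γ₂)
    (c : ℝ) (hc : 0 < c) :
    (∃ C τ₀ : ℝ, 0 < C ∧ ∀ τ : ℝ, τ₀ < τ →
      ‖(Rmat a b γ₁ γ₂ c τ).det *
            ((2 * Real.sqrt γ₁ / (Real.sqrt γ₁ + Real.sqrt γ₂) : ℝ) : ℂ) *
            Complex.exp ((a - b) * (zfun c τ / Real.sqrt γ₂)) - 1‖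
        ≤ C * Real.exp (-2 * c * τ * min (b / Real.sqrt γ₁) ((a - b) / Real.sqrt γ₂))) ∧
    ∃ τ₁ : ℝ, ∀ τ : ℝ, τ₁ < τ → (Rmat a b γ₁ γ₂ c τ).det ≠ 0 := by
  have hs1 : (0:ℝ) < Real.sqrt γ₁ := Real.sqrt_pos.2 h1
  have hs2 : (0:ℝ) < Real.sqrt γ₂ := Real.sqrt_pos.2 h2
  set m : ℝ := min (b / Real.sqrt γ₁) ((a - b) / Real.sqrt γ₂) with hm
  have hmpos : 0 < m := lt_min (by positivity) (div_pos (by linarith) hs2)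
  constructor
  · exact ⟨3, 0, by norm_num, fun τ hτ => bound a b hb hba γ₁ γ₂ h1 h2 c hc τ hτ⟩
  · refine ⟨max 0 (Real.log 3 / (2 * c * m)), fun τ hτ => ?_⟩
    have hτ0 : 0 < τ := lt_of_le_of_lt (le_max_left _ _) hτ
    have hτ3 : Real.log 3 / (2 * c * m) < τ := lt_of_le_of_lt (le_max_right _ _) hτ
    have hB := bound a b hb hba γ₁ γ₂ h1 h2 c hc τ hτ0
    have hsmall : 3 * Real.exp (-2 * c * τ * m) < 1 := by
      have h3 : -2 * c * τ * m < -Real.log 3 := by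
        have := (div_lt_iff₀ (by positivity : (0:ℝ) < 2 * c * m)).mp hτ3
        nlinarith
      have := Real.exp_lt_exp.2 h3
      rw [Real.exp_neg, Real.exp_log (by norm_num : (0:ℝ) < 3)] at this
      nlinarith
    intro hdet
    rw [hdet] at hB
    simp only [zero_mul, zero_sub, norm_neg, norm_one] at hB
    linarith
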